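/- arXiv:1206.6940 — 2 statements merged into one kernel-verified Lean document; each statement's English description precedes it below -/
import Mathlib

section
/- Let α, β, γ ∈ R^n be such that lt(ᾱ) divides lt(β̄) and the sig-lead ratio of γ exceeds the sig-lead ratios of both α and β, i.e., sig(γ)/lt(γ̄) > sig(α)/lt(ᾱ) and sig(γ)/lt(γ̄) > sig(β)/lt(β̄) as Laurent module terms. Then sig(spair(α, γ)) divides sig(spair(β, γ)). -/
/-- High ratio base divisor criterion (Theorem 3.2).  Module terms form a
linearly ordered type `μ` acted on by Laurent monomials (exponent vectors in
`ℤ^n`), the action being additive and order-preserving.  `Sα, Sβ, Sγ` are the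
signatures and `a, b, c` the lead-term exponent vectors of `α, β, γ`.  If
`lt ᾱ ∣ lt β̄` (componentwise `a ≤ b`) and the sig-lead ratio of `γ` exceeds
those of `α` and `β`, then `sig (spair α γ)` divides `sig (spair β γ)`, where
`sig (spair α γ) = max ((lt γ̄ / d)·Sα) ((lt ᾱ / d)·Sγ)` with
`d = gcd (lt ᾱ) (lt γ̄)`, and divisibility means reachability by the action of
a monomial with nonnegative exponents. -/
theorem stmt_14 (n : ℕ) (μ : Type*) [LinearOrder μ]
    (act : (Fin n → ℤ) → μ → μ)
    (hact : ∀ u v s, act (u + v) s = act u (act v s))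
    (hact0 : ∀ s, act 0 s = s)
    (hmono : ∀ u (s t : μ), s ≤ t ↔ act u s ≤ act u t)
    (Sα Sβ Sγ : μ) (a b c : Fin n → ℤ)
    (hdvd : ∀ i, a i ≤ b i)
    (hratioα : act (-a) Sα < act (-c) Sγ)
    (hratioβ : act (-b) Sβ < act (-c) Sγ) :
    ∃ w : Fin n → ℤ, (∀ i, 0 ≤ w i) ∧
      act w (max (act (fun i => c i - min (a i) (c i)) Sα)
                 (act (fun i => a i - min (a i) (c i)) Sγ))
        = max (act (fun i => c i - min (b i) (c i)) Sβ)
              (act (fun i => b i - min (b i) (c i)) Sγ) := by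
  have hstrict : ∀ u (s t : μ), s < t ↔ act u s < act u t := by
    intro u s t
    simp only [lt_iff_le_not_ge, ← hmono]
  have key : ∀ (x y : Fin n → ℤ) (S T : μ), act (-x) S < act (-y) T →
      act (fun i => y i - min (x i) (y i)) S < act (fun i => x i - min (x i) (y i)) T := by
    intro x y S T h
    have e1 : (fun i => y i - min (x i) (y i))
        = (fun i => x i + y i - min (x i) (y i)) + (-x) := by
      funext i; simp only [Pi.add_apply, Pi.neg_apply]; ring
    have e2 : (fun i => x i - min (x i) (y i))
        = (fun i => x i + y i - min (x i) (y i)) + (-y) := by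
      funext i; simp only [Pi.add_apply, Pi.neg_apply]; ring
    rw [e1, e2, hact, hact]
    exact (hstrict _ _ _).mp h
  have h1 := key a c Sα Sγ hratioα
  have h2 := key b c Sβ Sγ hratioβ
  refine ⟨fun i => (b i - min (b i) (c i)) - (a i - min (a i) (c i)), fun i => ?_, ?_⟩
  · simp only; have := hdvd i; omega
  · rw [max_eq_right h1.le, max_eq_right h2.le, ← hact]
    congr 1
    funext i; simp only [Pi.add_apply, Pi.neg_apply]; ring
end

section
/- Consider the function f(g, s·x^v·e_i) = lt(g)·y_i^v·y_{i,1} from pairs of a nonzero polynomial g ∈ R = k[x_1,...,x_k] and a module term s·x^v·e_i ∈ R^m (s a nonzero scalar) into the polynomial ring R' = k[x_1,...,x_k, y_{i,j} : 1 ≤ i ≤ m, 1 ≤ j ≤ k], where y_i^v denotes Π_j y_{i,j}^{v_j}. Then f(g, T) divides f(g', T') if and only if both lt(g) divides lt(g') and T divides T'. -/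
/-- The encoding monomial `f(g, s·x^v·e_i) = lt(g)·y_i^v·y_{i,1}` used in the
termination proof.  Monomials of `R = k[x_0,…,x_k]` are exponent vectors
`Fin (k+1) → ℕ`; a module term of `R^m` is a pair `(i, v)` of a component and
an exponent vector (the nonzero scalar `s` is irrelevant to divisibility);
`R' = k[x, y_{i,j}]` has monomials indexed by `Fin (k+1) ⊕ (Fin m × Fin (k+1))`.
Divisibility of monomials is componentwise `≤`; divisibility of module terms
requires equal components and componentwise `≤`.  Then `f(g,T) ∣ f(g',T')` iff
`lt g ∣ lt g'` and `T ∣ T'`. -/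
theorem stmt_19 (k m : ℕ)
    (f : (Fin (k+1) → ℕ) → (Fin m × (Fin (k+1) → ℕ)) →
        (Fin (k+1) ⊕ (Fin m × Fin (k+1))) → ℕ)
    (hf : ∀ (l : Fin (k+1) → ℕ) (i : Fin m) (v : Fin (k+1) → ℕ),
      (∀ j, f l (i, v) (Sum.inl j) = l j) ∧
      (∀ (i' : Fin m) (j : Fin (k+1)),
        f l (i, v) (Sum.inr (i', j)) =
          if i' = i then v j + (if j = 0 then 1 else 0) else 0))
    (l l' : Fin (k+1) → ℕ) (i i' : Fin m) (v v' : Fin (k+1) → ℕ) :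
    ((∀ w, f l (i, v) w ≤ f l' (i', v') w) ↔
      ((∀ j, l j ≤ l' j) ∧ (i = i' ∧ ∀ j, v j ≤ v' j))) := by
  obtain ⟨h1, h2⟩ := hf l i v
  obtain ⟨h1', h2'⟩ := hf l' i' v'
  constructor
  · intro h
    have hii : i = i' := by
      by_contra hne
      have := h (Sum.inr (i, 0))
      rw [h2 i 0, h2' i 0] at this
      simp [hne, Ne.symm hne] at this
    subst hii
    refine ⟨fun j => ?_, rfl, fun j => ?_⟩
    · have := h (Sum.inl j); rwa [h1, h1'] at this
    · have := h (Sum.inr (i, j))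
      rw [h2 i j, h2' i j] at this
      simp at this
      omega
  · rintro ⟨hl, rfl, hv⟩ w
    rcases w with j | ⟨i'', j⟩
    · rw [h1, h1']; exact hl j
    · rw [h2 i'' j, h2' i'' j]
      by_cases hc : i'' = i
      · simp only [hc, if_pos rfl, if_true]
        split_ifs
        · have := hv j; omega
        · exact hv j
      · simp [hc]
end
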